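/- arXiv:math/0302313 — 2 statements merged into one kernel-verified Lean document; each statement's English description precedes it below -/
import Mathlib

section
/- Let [n] = R ∪ S ∪ T be a partition with T nonempty and suppose H̃_p(Δ_R^{S,T}) ≠ 0. Then for any T' ⊆ T there exist R' ⊇ R and S' ⊇ S (with R'∪S'∪T' partitioning [n]) such that H̃_p(Δ_{R'}^{S',T'}) ≠ 0. -/
open Finset

namespace SCx

variable (k : Type) [Field k] {n : ℕ}

/-- An (abstract) simplicial complex on the vertex set `Fin n`:
a set of finsets closed under taking subsets. -/
def IsComplex (Δ : Set (Finset (Fin n))) : Prop :=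
  ∀ F ∈ Δ, ∀ G ⊆ F, G ∈ Δ

/-- Simplicial `p`-chains with coefficients in `k`: functions on the faces of
cardinality `p+1`. -/
abbrev Chains (Δ : Set (Finset (Fin n))) (p : ℤ) : Type :=
  {F : Finset (Fin n) // F ∈ Δ ∧ (F.card : ℤ) = p + 1} → k

open Classical in
/-- The underlying function of the simplicial boundary map, written via its
transpose formula:
`(∂ f) G = ∑_{x : insert x G ∈ Δ} (-1)^{pos of x in insert x G} f (insert x G)`. -/
noncomputable def boundaryFun (Δ : Set (Finset (Fin n))) (p : ℤ)
    (f : Chains k Δ p) : Chains k Δ (p - 1) := fun G => ∑ x : Fin n,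
  if h : x ∉ G.1 ∧ insert x G.1 ∈ Δ then
    (-1 : k) ^ (G.1.filter (fun y => y < x)).card *
      f ⟨insert x G.1, h.2, by
        have hc := G.2.2
        rw [Finset.card_insert_of_notMem h.1]
        push_cast at hc ⊢
        omega⟩
  else 0

/-- The simplicial boundary map. -/
noncomputable def boundary (Δ : Set (Finset (Fin n))) (p : ℤ) :
    Chains k Δ p →ₗ[k] Chains k Δ (p - 1) where
  toFun := boundaryFun k Δ p
  map_add' f g := by
    funext G
    unfold boundaryFun
    rw [Pi.add_apply]
    rw [← Finset.sum_add_distrib]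
    refine Finset.sum_congr rfl fun x _ => ?_
    split_ifs with h
    · rw [Pi.add_apply]; ring
    · rw [add_zero]
  map_smul' c f := by
    funext G
    unfold boundaryFun
    simp only [RingHom.id_apply, Pi.smul_apply, smul_eq_mul, Finset.mul_sum]
    refine Finset.sum_congr rfl fun x _ => ?_
    split_ifs with h
    · ring
    · rw [mul_zero]

/-- Transport of chains along an equality of degrees. -/
noncomputable def chainsCongr (Δ : Set (Finset (Fin n))) {p q : ℤ} (h : p = q) :
    Chains k Δ p ≃ₗ[k] Chains k Δ q := by
  subst h; exact LinearEquiv.refl k _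

noncomputable def cycles (Δ : Set (Finset (Fin n))) (p : ℤ) : Submodule k (Chains k Δ p) :=
  LinearMap.ker (boundary k Δ p)

noncomputable def boundaries (Δ : Set (Finset (Fin n))) (p : ℤ) : Submodule k (Chains k Δ p) :=
  LinearMap.range ((chainsCongr k Δ (show p + 1 - 1 = p by ring)).toLinearMap ∘ₗ
    boundary k Δ (p + 1))

/-- Reduced simplicial homology of `Δ` in degree `p`, with coefficients in the field `k`,
defined as cycles modulo (boundaries intersected with cycles).  With this convention
`H̃_{-1}({∅}) = k`. -/
abbrev ReducedHomology (Δ : Set (Finset (Fin n))) (p : ℤ) :=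
  ↥(cycles k Δ p) ⧸ (Submodule.comap (cycles k Δ p).subtype (boundaries k Δ p))

/-- The Alexander dual of `Δ`. -/
def dual (Δ : Set (Finset (Fin n))) : Set (Finset (Fin n)) := {F | Fᶜ ∉ Δ}

/-- The restriction `Δ_R` of `Δ` to a vertex subset `R`. -/
def restrict (Δ : Set (Finset (Fin n))) (R : Finset (Fin n)) : Set (Finset (Fin n)) :=
  {F | F ∈ Δ ∧ F ⊆ R}

/-- The link `lk_Δ S`. -/
def link (Δ : Set (Finset (Fin n))) (S : Finset (Fin n)) : Set (Finset (Fin n)) :=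
  {F | Disjoint F S ∧ F ∪ S ∈ Δ}

/-- `Δ_R^{S,T} = {F ⊆ R : F ∪ S ∈ Δ}` (for `T` the complement of `R ∪ S`). -/
def sub (Δ : Set (Finset (Fin n))) (R S : Finset (Fin n)) : Set (Finset (Fin n)) :=
  {F | F ⊆ R ∧ F ∪ S ∈ Δ}

/-- `Δ` has dimension `d - 1`, i.e. `d` is the maximal cardinality of a face. -/
def IsDim (Δ : Set (Finset (Fin n))) (d : ℕ) : Prop :=
  (∀ F ∈ Δ, F.card ≤ d) ∧ ∃ F ∈ Δ, F.card = d

/-- `Δ` has frame dimension `c - 1`, i.e. `c` is the largest integer such that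
every `c`-subset of `[n]` is a face of `Δ`. -/
def IsFrame (Δ : Set (Finset (Fin n))) (c : ℕ) : Prop :=
  (∀ F : Finset (Fin n), F.card ≤ c → F ∈ Δ) ∧
    ∃ F : Finset (Fin n), F.card = c + 1 ∧ F ∉ Δ

/-- A facet: a maximal face. -/
def IsFacet (Δ : Set (Finset (Fin n))) (F : Finset (Fin n)) : Prop :=
  F ∈ Δ ∧ ∀ G ∈ Δ, F ⊆ G → F = G

open Classical

lemma chainsCongr_apply (Δ : Set (Finset (Fin n))) {p q : ℤ} (h : p = q)
    (f : Chains k Δ p) (G : {F : Finset (Fin n) // F ∈ Δ ∧ (F.card : ℤ) = q + 1}) :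
    chainsCongr k Δ h f G = f ⟨G.1, G.2.1, by rw [h]; exact G.2.2⟩ := by
  subst h; rfl

lemma boundary_apply (Δ : Set (Finset (Fin n))) (p : ℤ) (f : Chains k Δ p)
    (G : {F : Finset (Fin n) // F ∈ Δ ∧ (F.card : ℤ) = (p - 1) + 1}) :
    boundary k Δ p f G = ∑ x : Fin n,
      if h : x ∉ G.1 ∧ insert x G.1 ∈ Δ then
        (-1 : k) ^ (G.1.filter (fun y => y < x)).card *
          f ⟨insert x G.1, h.2, by
            have hc := G.2.2
            rw [Finset.card_insert_of_notMem h.1]; push_cast at hc ⊢; omega⟩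
      else 0 := rfl

noncomputable def ext (Γ' Γ : Set (Finset (Fin n))) (p : ℤ) :
    Chains k Γ' p →ₗ[k] Chains k Γ p where
  toFun f G := if h : G.1 ∈ Γ' then f ⟨G.1, h, G.2.2⟩ else 0
  map_add' f g := by funext G; by_cases h : G.1 ∈ Γ' <;> simp [h]
  map_smul' c f := by funext G; by_cases h : G.1 ∈ Γ' <;> simp [h]

lemma ext_apply (Γ' Γ : Set (Finset (Fin n))) (p : ℤ) (f : Chains k Γ' p)
    (G : {F : Finset (Fin n) // F ∈ Γ ∧ (F.card : ℤ) = p + 1}) :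
    ext k Γ' Γ p f G = if h : G.1 ∈ Γ' then f ⟨G.1, h, G.2.2⟩ else 0 := rfl

lemma ext_boundary (Γ' Γ : Set (Finset (Fin n))) (hsub : Γ' ⊆ Γ)
    (hcl : ∀ F : Finset (Fin n), ∀ a : Fin n, insert a F ∈ Γ' → F ∈ Γ')
    (p : ℤ) (f : Chains k Γ' p) :
    boundary k Γ p (ext k Γ' Γ p f) = ext k Γ' Γ (p - 1) (boundary k Γ' p f) := by
  funext G
  simp only [boundary_apply, ext_apply]
  by_cases hG : G.1 ∈ Γ'
  · rw [dif_pos hG]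
    refine Finset.sum_congr rfl fun x' _ => ?_
    by_cases hx : x' ∈ G.1
    · simp [hx]
    · by_cases h' : insert x' G.1 ∈ Γ'
      · simp [hx, h', hsub h']
      · simp [hx, h', mul_zero]
  · rw [dif_neg hG]
    refine Finset.sum_eq_zero fun x' _ => ?_
    by_cases hh : x' ∉ G.1 ∧ insert x' G.1 ∈ Γ
    · rw [dif_pos hh, dif_neg (fun hc => hG (hcl _ _ hc)), mul_zero]
    · rw [dif_neg hh]

lemma mem_of_subsingleton {M : Type} [AddCommGroup M] [Module k M]
    (q : Submodule k M) (h : Subsingleton (M ⧸ q)) (a : M) : a ∈ q := by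
  rw [← Submodule.Quotient.mk_eq_zero]; exact Subsingleton.elim _ _

lemma chains_val_congr {Δ : Set (Finset (Fin n))} {p : ℤ} (f : Chains k Δ p)
    {A B : Finset (Fin n)} {hA : A ∈ Δ} {hcA : (A.card : ℤ) = p + 1}
    {hB : B ∈ Δ} {hcB : (B.card : ℤ) = p + 1} (h : A = B) :
    f ⟨A, hA, hcA⟩ = f ⟨B, hB, hcB⟩ := by subst h; rfl

lemma key (Δ : Set (Finset (Fin n))) (hΔ : IsComplex Δ) (R S : Finset (Fin n))
    (x : Fin n) (hxR : x ∉ R) (hxS : x ∉ S) (p : ℤ)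
    (h1 : Subsingleton (ReducedHomology k (sub Δ (insert x R) S) p))
    (h2 : Subsingleton (ReducedHomology k (sub Δ R (insert x S)) p)) :
    Subsingleton (ReducedHomology k (sub Δ R S) p) := by
  set Γ : Set (Finset (Fin n)) := sub Δ R S with hΓdef
  set Γ₁ : Set (Finset (Fin n)) := sub Δ (insert x R) S with hΓ₁def
  set Γ₂ : Set (Finset (Fin n)) := sub Δ R (insert x S) with hΓ₂def
  have memΓ₁ : ∀ F ∈ Γ, F ∈ Γ₁ := fun F hF =>
    ⟨hF.1.trans (Finset.subset_insert x R), hF.2⟩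
  have memΓ₁' : ∀ F, F ∈ Γ₁ → x ∉ F → F ∈ Γ := by
    intro F hF hx
    refine ⟨fun y hy => ?_, hF.2⟩
    rcases Finset.mem_insert.mp (hF.1 hy) with h | h
    · exact absurd (h ▸ hy) hx
    · exact h
  have memΓ₂ : ∀ F ∈ Γ₂, F ∈ Γ := fun F hF =>
    ⟨hF.1, hΔ _ hF.2 _ (Finset.union_subset_union_right (Finset.subset_insert x S))⟩
  have hxΓ : ∀ F ∈ Γ, x ∉ F := fun F hF hx => hxR (hF.1 hx)
  have hxΓ₂ : ∀ F ∈ Γ₂, x ∉ F := fun F hF hx => hxR (hF.1 hx)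
  have e4 : ∀ F : Finset (Fin n), x ∉ F → (insert x F ∈ Γ₁ ↔ F ∈ Γ₂) := by
    intro F hxF
    constructor
    · intro h
      refine ⟨fun y hy => ?_, ?_⟩
      · rcases Finset.mem_insert.mp (h.1 (Finset.mem_insert_of_mem hy)) with h' | h'
        · exact absurd (h' ▸ hy) hxF
        · exact h'
      · have h2 := h.2
        rw [Finset.insert_union] at h2
        rw [Finset.union_insert]
        exact h2
    · intro h
      refine ⟨Finset.insert_subset_insert x h.1, ?_⟩
      rw [Finset.insert_union, ← Finset.union_insert]
      exact h.2
  have dcl : ∀ (R' S' : Finset (Fin n)) (F : Finset (Fin n)) (a : Fin n),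
      insert a F ∈ sub Δ R' S' → F ∈ sub Δ R' S' := by
    intro R' S' F a h
    exact ⟨(Finset.subset_insert a F).trans h.1,
      hΔ _ h.2 _ (Finset.union_subset_union_left (Finset.subset_insert a F))⟩
  have h1' : ∀ z₁ : Chains k Γ₁ p, boundary k Γ₁ p z₁ = 0 →
      ∃ w : Chains k Γ₁ (p+1),
        chainsCongr k Γ₁ (show p+1-1 = p by ring) (boundary k Γ₁ (p+1) w) = z₁ := by
    intro z₁ hz₁
    have hm := mem_of_subsingleton k _ h1 (⟨z₁, LinearMap.mem_ker.mpr hz₁⟩ : cycles k Γ₁ p)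
    rw [Submodule.mem_comap] at hm
    obtain ⟨w, hw⟩ := LinearMap.mem_range.mp hm
    exact ⟨w, hw⟩
  have h2' : ∀ z₂ : Chains k Γ₂ p, boundary k Γ₂ p z₂ = 0 →
      ∃ v : Chains k Γ₂ (p+1),
        chainsCongr k Γ₂ (show p+1-1 = p by ring) (boundary k Γ₂ (p+1) v) = z₂ := by
    intro z₂ hz₂
    have hm := mem_of_subsingleton k _ h2 (⟨z₂, LinearMap.mem_ker.mpr hz₂⟩ : cycles k Γ₂ p)
    rw [Submodule.mem_comap] at hm
    obtain ⟨v, hv⟩ := LinearMap.mem_range.mp hm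
    exact ⟨v, hv⟩
  rw [Submodule.Quotient.subsingleton_iff, Submodule.eq_top_iff']
  rintro ⟨z, hz⟩
  rw [Submodule.mem_comap]
  have hz' : boundary k Γ p z = 0 := LinearMap.mem_ker.mp hz
  -- z extended to Γ₁ is a cycle
  have hz₁ : boundary k Γ₁ p (ext k Γ Γ₁ p z) = 0 := by
    rw [ext_boundary k Γ Γ₁ memΓ₁ (dcl R S) p z, hz', map_zero]
  obtain ⟨w, hw⟩ := h1' (ext k Γ Γ₁ p z) hz₁
  have hins : ∀ F : Finset (Fin n), F ∈ Γ₂ → insert x F ∈ Γ₁ :=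
    fun F hF => (e4 F (hxΓ₂ F hF)).mpr hF
  set u : Chains k Γ₂ p := fun F =>
    (-1 : k) ^ ((F.1.filter (fun y => x < y)).card) *
      w ⟨insert x F.1, hins F.1 F.2.1, by
        rw [Finset.card_insert_of_notMem (hxΓ₂ F.1 F.2.1)]
        have hc := F.2.2; push_cast at hc ⊢; omega⟩ with hu_def
  have hu : boundary k Γ₂ p u = 0 := by
    funext G
    have hGmem : G.1 ∈ Γ₂ := G.2.1
    have hxG : x ∉ G.1 := hxΓ₂ _ hGmem
    have hcard : (((insert x G.1).card : ℤ)) = (p + 1 - 1) + 1 := by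
      rw [Finset.card_insert_of_notMem hxG]
      have hc := G.2.2; push_cast at hc ⊢; omega
    have h0 : boundary k Γ₁ (p+1) w ⟨insert x G.1, hins _ hGmem, hcard⟩ = 0 := by
      have hcard' : (((insert x G.1).card : ℤ)) = p + 1 := by
        rw [Finset.card_insert_of_notMem hxG]
        have hc := G.2.2; push_cast at hc ⊢; omega
      have heq := congrFun hw ⟨insert x G.1, hins _ hGmem, hcard'⟩
      rw [chainsCongr_apply, ext_apply] at heq
      rw [dif_neg (fun hc : insert x G.1 ∈ Γ =>
        (hxΓ _ hc) (Finset.mem_insert_self x G.1))] at heq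
      exact heq
    have expand : boundary k Γ₂ p u G =
        (-1:k) ^ ((G.1.filter (fun y => x < y)).card) *
          boundary k Γ₁ (p+1) w ⟨insert x G.1, hins _ hGmem, hcard⟩ := by
      rw [boundary_apply, boundary_apply, Finset.mul_sum]
      refine Finset.sum_congr rfl fun x' _ => ?_
      by_cases hxx : x' = x
      · subst hxx
        rw [dif_neg (fun hc => hxR (hc.2.1 (Finset.mem_insert_self x' G.1))),
            dif_neg (fun hc => hc.1 (Finset.mem_insert_self x' G.1)), mul_zero]
      · by_cases hcond : x' ∉ G.1 ∧ insert x' G.1 ∈ Γ₂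
        · have hxig : x ∉ insert x' G.1 := by
            intro hc
            rcases Finset.mem_insert.mp hc with h | h
            · exact hxx h.symm
            · exact hxG h
          have hmem1 : insert x' (insert x G.1) ∈ Γ₁ := by
            rw [Finset.insert_comm]; exact (e4 _ hxig).mpr hcond.2
          have hcond' : x' ∉ insert x G.1 ∧ insert x' (insert x G.1) ∈ Γ₁ := by
            refine ⟨fun hc => ?_, hmem1⟩
            rcases Finset.mem_insert.mp hc with h | h
            · exact hxx h
            · exact hcond.1 h
          rw [dif_pos hcond, dif_pos hcond', hu_def]
          dsimp only
          rw [chains_val_congr k w (Finset.insert_comm x x' G.1)]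
          by_cases hlt : x < x'
          · have hb : ((insert x' G.1).filter (fun y => x < y)).card
                = (G.1.filter (fun y => x < y)).card + 1 := by
              rw [Finset.filter_insert, if_pos hlt, Finset.card_insert_of_notMem
                (fun hc => hcond.1 (Finset.mem_of_mem_filter _ hc))]
            have hc2 : ((insert x G.1).filter (fun y => y < x')).card
                = (G.1.filter (fun y => y < x')).card + 1 := by
              rw [Finset.filter_insert, if_pos hlt, Finset.card_insert_of_notMem
                (fun hc => hxG (Finset.mem_of_mem_filter _ hc))]
            rw [hb, hc2, pow_succ, pow_succ]
            ring
          · have hb : ((insert x' G.1).filter (fun y => x < y)).card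
                = (G.1.filter (fun y => x < y)).card := by
              rw [Finset.filter_insert, if_neg hlt]
            have hc2 : ((insert x G.1).filter (fun y => y < x')).card
                = (G.1.filter (fun y => y < x')).card := by
              rw [Finset.filter_insert, if_neg hlt]
            rw [hb, hc2]
            ring
          · exact (e4 _ hxig).mpr hcond.2
          · rw [Finset.card_insert_of_notMem hxig, Finset.card_insert_of_notMem hcond.1]
            have hc := G.2.2; push_cast at hc ⊢; omega
          · exact hmem1
          · rw [Finset.card_insert_of_notMem hcond'.1, Finset.card_insert_of_notMem hxG]
            have hc := G.2.2; push_cast at hc ⊢; omega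
        · rw [dif_neg hcond, dif_neg, mul_zero]
          rintro ⟨hc1, hc2⟩
          refine hcond ⟨fun h => hc1 (Finset.mem_insert_of_mem h), ?_⟩
          have hxig : x ∉ insert x' G.1 := by
            intro hc
            rcases Finset.mem_insert.mp hc with h | h
            · exact hxx h.symm
            · exact hxG h
          refine (e4 _ hxig).mp ?_
          rw [Finset.insert_comm]
          exact hc2
    rw [Pi.zero_apply, expand, h0, mul_zero]
  obtain ⟨v, hv⟩ := h2' u hu
  -- final assembly
  have hsubz : (cycles k Γ p).subtype ⟨z, hz⟩ = z := rfl
  rw [hsubz]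
  set t₁ : Chains k Γ (p+1) := fun F => w ⟨F.1, memΓ₁ F.1 F.2.1, F.2.2⟩ with ht₁
  refine LinearMap.mem_range.mpr
    ⟨t₁ + ((-1:k)^((p+1).toNat)) • (ext k Γ₂ Γ (p+1) v), ?_⟩
  funext G
  have hxG' : x ∉ G.1 := hxΓ _ G.2.1
  have pfG : ((G.1.card : ℤ)) = ((p+1) - 1) + 1 := by
    have := G.2.2; push_cast at this ⊢; omega
  have pfi : (((insert x G.1).card : ℤ)) = (p+1) + 1 := by
    rw [Finset.card_insert_of_notMem hxG']
    have := G.2.2; push_cast at this ⊢; omega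
  have hB2 : boundary k Γ (p+1) (ext k Γ₂ Γ (p+1) v) ⟨G.1, G.2.1, pfG⟩
      = (if h : G.1 ∈ Γ₂ then u ⟨G.1, h, G.2.2⟩ else 0) := by
    rw [ext_boundary k Γ₂ Γ memΓ₂ (dcl R (insert x S)) (p+1) v, ext_apply]
    split_ifs with h
    · have heq := congrFun hv ⟨G.1, h, G.2.2⟩
      rw [chainsCongr_apply] at heq
      exact heq
    · rfl
  have hzG : boundary k Γ₁ (p+1) w ⟨G.1, memΓ₁ _ G.2.1, pfG⟩ = z G := by
    have heq := congrFun hw ⟨G.1, memΓ₁ _ G.2.1, G.2.2⟩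
    rw [chainsCongr_apply, ext_apply] at heq
    rw [dif_pos G.2.1] at heq
    exact heq
  have hsplit : boundary k Γ₁ (p+1) w ⟨G.1, memΓ₁ _ G.2.1, pfG⟩
      - boundary k Γ (p+1) t₁ ⟨G.1, G.2.1, pfG⟩
      = (if h : G.1 ∈ Γ₂ then
          (-1:k)^((G.1.filter (fun y => y < x)).card) * w ⟨insert x G.1, hins _ h, pfi⟩
        else 0) := by
    rw [boundary_apply, boundary_apply, ← Finset.sum_sub_distrib,
        Finset.sum_eq_single x]
    · have hnegΓ : ¬(x ∉ G.1 ∧ insert x G.1 ∈ Γ) :=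
        fun hc => hxR (hc.2.1 (Finset.mem_insert_self x G.1))
      rw [dif_neg hnegΓ, sub_zero]
      by_cases h : G.1 ∈ Γ₂
      · rw [dif_pos ⟨hxG', (e4 _ hxG').mpr h⟩, dif_pos h]
      · have hneg1 : ¬(x ∉ G.1 ∧ insert x G.1 ∈ Γ₁) :=
          fun hc => h ((e4 _ hxG').mp hc.2)
        rw [dif_neg hneg1, dif_neg h]
    · intro b _ hbx
      have hxi : x ∉ insert b G.1 := by
        intro hc
        rcases Finset.mem_insert.mp hc with h | h
        · exact hbx h.symm
        · exact hxG' h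
      by_cases hc : b ∉ G.1 ∧ insert b G.1 ∈ Γ
      · rw [dif_pos (⟨hc.1, memΓ₁ _ hc.2⟩ : b ∉ G.1 ∧ insert b G.1 ∈ Γ₁),
          dif_pos hc, ht₁]
        dsimp only
        exact sub_eq_zero_of_eq rfl
      · have hc1 : ¬(b ∉ G.1 ∧ insert b G.1 ∈ Γ₁) :=
          fun hcc => hc ⟨hcc.1, memΓ₁' _ hcc.2 hxi⟩
        rw [dif_neg hc1, dif_neg hc, sub_self]
    · intro hx; exact absurd (Finset.mem_univ x) hx
  have hexp : (G.1.filter (fun y => y < x)).card + (G.1.filter (fun y => x < y)).card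
      = (p+1).toNat := by
    have hfc : G.1.filter (fun y => x < y) = G.1.filter (fun y => ¬ y < x) := by
      refine Finset.filter_congr fun y hy => ?_
      have hne : y ≠ x := fun he => hxG' (he ▸ hy)
      constructor
      · intro h; simp only [not_lt]; exact le_of_lt h
      · intro h
        simp only [not_lt] at h
        exact lt_of_le_of_ne h (Ne.symm hne)
    rw [hfc, Finset.card_filter_add_card_filter_not]
    have := G.2.2; omega
  have final : boundary k Γ (p+1) t₁ ⟨G.1, G.2.1, pfG⟩
      + (-1:k)^((p+1).toNat)
        * boundary k Γ (p+1) (ext k Γ₂ Γ (p+1) v) ⟨G.1, G.2.1, pfG⟩ = z G := by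
    rw [hB2, ← hzG]
    by_cases h : G.1 ∈ Γ₂
    · rw [dif_pos h] at hsplit ⊢
      have huval : u ⟨G.1, h, G.2.2⟩
          = (-1:k)^((G.1.filter (fun y => x < y)).card)
            * w ⟨insert x G.1, hins _ h, pfi⟩ := by rw [hu_def]
      rw [huval, ← hexp, pow_add]
      have hDD : ((-1:k))^((G.1.filter (fun y => x < y)).card)
          * ((-1:k))^((G.1.filter (fun y => x < y)).card) = 1 := by
        rw [← pow_add]
        exact Even.neg_one_pow ⟨(G.1.filter (fun y => x < y)).card, rfl⟩
      linear_combination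
        ((-1:k)^((G.1.filter (fun y => y < x)).card)
          * w ⟨insert x G.1, hins _ h, pfi⟩) * hDD - hsplit
    · rw [dif_neg h] at hsplit ⊢
      linear_combination (-1 : k) * hsplit
  calc ((chainsCongr k Γ (show p+1-1 = p by ring)).toLinearMap ∘ₗ
        boundary k Γ (p+1)) (t₁ + ((-1:k)^((p+1).toNat)) • (ext k Γ₂ Γ (p+1) v)) G
      = boundary k Γ (p+1) t₁ ⟨G.1, G.2.1, pfG⟩
        + (-1:k)^((p+1).toNat)
          * boundary k Γ (p+1) (ext k Γ₂ Γ (p+1) v) ⟨G.1, G.2.1, pfG⟩ := by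
        rw [LinearMap.comp_apply, LinearEquiv.coe_coe, chainsCongr_apply, map_add,
          map_smul, Pi.add_apply, Pi.smul_apply, smul_eq_mul]
    _ = z G := final

lemma main_ind (Δ : Set (Finset (Fin n))) (hΔ : IsComplex Δ) (p : ℤ)
    (T' : Finset (Fin n)) :
    ∀ m : ℕ, ∀ R S T : Finset (Fin n), (T \ T').card = m →
    Disjoint R S → Disjoint R T → Disjoint S T → R ∪ S ∪ T = Finset.univ → T' ⊆ T →
    ¬ Subsingleton (ReducedHomology k (sub Δ R S) p) →
    ∃ R' S' : Finset (Fin n), R ⊆ R' ∧ S ⊆ S' ∧ Disjoint R' S' ∧ Disjoint R' T' ∧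
      Disjoint S' T' ∧ R' ∪ S' ∪ T' = Finset.univ ∧
      ¬ Subsingleton (ReducedHomology k (sub Δ R' S') p) := by
  intro m
  induction m with
  | zero =>
    intro R S T hm hRS hRT hST hcov hsub hH
    have hTT : T = T' := Finset.Subset.antisymm
      (Finset.sdiff_eq_empty_iff_subset.mp (Finset.card_eq_zero.mp hm)) hsub
    subst hTT
    exact ⟨R, S, subset_rfl, subset_rfl, hRS, hRT, hST, hcov, hH⟩
  | succ m ih =>
    intro R S T hm hRS hRT hST hcov hsub hH
    have hne : (T \ T').Nonempty := by rw [← Finset.card_pos, hm]; omega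
    obtain ⟨x, hx⟩ := hne
    have hxT : x ∈ T := (Finset.mem_sdiff.mp hx).1
    have hxT' : x ∉ T' := (Finset.mem_sdiff.mp hx).2
    have hxR : x ∉ R := fun hc => (Finset.disjoint_left.mp hRT) hc hxT
    have hxS : x ∉ S := fun hc => (Finset.disjoint_left.mp hST) hc hxT
    have hkey : ¬ Subsingleton (ReducedHomology k (sub Δ (insert x R) S) p)
        ∨ ¬ Subsingleton (ReducedHomology k (sub Δ R (insert x S)) p) := by
      by_contra hc
      rw [not_or, not_not, not_not] at hc
      exact hH (key k Δ hΔ R S x hxR hxS p hc.1 hc.2)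
    have hm' : ((T.erase x) \ T').card = m := by
      rw [Finset.erase_sdiff_comm, Finset.card_erase_of_mem hx, hm]
      omega
    have hsub' : T' ⊆ T.erase x := fun y hy =>
      Finset.mem_erase.mpr ⟨fun he => hxT' (he ▸ hy), hsub hy⟩
    rcases hkey with hk | hk
    · have hcov' : insert x R ∪ S ∪ T.erase x = Finset.univ := by
        apply Finset.eq_univ_of_forall
        intro y
        have hy : y ∈ R ∪ S ∪ T := by rw [hcov]; exact Finset.mem_univ y
        simp only [Finset.mem_union, Finset.mem_insert, Finset.mem_erase] at hy ⊢
        by_cases hyx : y = x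
        · exact Or.inl (Or.inl (Or.inl hyx))
        · tauto
      obtain ⟨R', S', h1, h2, h3, h4, h5, h6, h7⟩ :=
        ih (insert x R) S (T.erase x) hm'
          (Finset.disjoint_insert_left.mpr ⟨hxS, hRS⟩)
          (Finset.disjoint_insert_left.mpr
            ⟨Finset.notMem_erase x T, hRT.mono_right (Finset.erase_subset x T)⟩)
          (hST.mono_right (Finset.erase_subset x T)) hcov' hsub' hk
      exact ⟨R', S', (Finset.subset_insert x R).trans h1, h2, h3, h4, h5, h6, h7⟩
    · have hcov' : R ∪ insert x S ∪ T.erase x = Finset.univ := by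
        apply Finset.eq_univ_of_forall
        intro y
        have hy : y ∈ R ∪ S ∪ T := by rw [hcov]; exact Finset.mem_univ y
        simp only [Finset.mem_union, Finset.mem_insert, Finset.mem_erase] at hy ⊢
        by_cases hyx : y = x
        · exact Or.inl (Or.inr (Or.inl hyx))
        · tauto
      obtain ⟨R', S', h1, h2, h3, h4, h5, h6, h7⟩ :=
        ih R (insert x S) (T.erase x) hm'
          (Finset.disjoint_insert_right.mpr ⟨hxR, hRS⟩)
          (hRT.mono_right (Finset.erase_subset x T))
          (Finset.disjoint_insert_left.mpr
            ⟨Finset.notMem_erase x T, hST.mono_right (Finset.erase_subset x T)⟩)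
          hcov' hsub' hk
      exact ⟨R', S', h1, (Finset.subset_insert x S).trans h2, h3, h4, h5, h6, h7⟩

/-- reducing `T`: nonvanishing of `H̃_p(Δ_R^{S,T})` propagates to a
partition with prescribed smaller `T'`, in the same homological degree. -/
theorem stmt7 (k : Type) [Field k] {n : ℕ} (Δ : Set (Finset (Fin n)))
    (hΔ : IsComplex Δ) (R S T : Finset (Fin n))
    (hRS : Disjoint R S) (hRT : Disjoint R T) (hST : Disjoint S T)
    (hcov : R ∪ S ∪ T = Finset.univ) (hT : T.Nonempty) (p : ℤ)
    (h : ¬ Subsingleton (ReducedHomology k (sub Δ R S) p))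
    (T' : Finset (Fin n)) (hT' : T' ⊆ T) :
    ∃ R' S' : Finset (Fin n), R ⊆ R' ∧ S ⊆ S' ∧
      Disjoint R' S' ∧ Disjoint R' T' ∧ Disjoint S' T' ∧
      R' ∪ S' ∪ T' = Finset.univ ∧
      ¬ Subsingleton (ReducedHomology k (sub Δ R' S') p) :=
  main_ind k Δ hΔ p T' (T \ T').card R S T rfl hRS hRT hST hcov hT' h

end SCx
end

section
/- If H̃_p(Δ_{-(S∪T)}^{S,T}) ≠ 0 with p ≥ 0, then there exists a set S' strictly containing S with H̃_{p-1}(lk_Δ S') ≠ 0. -/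
open Finset

namespace SCx

variable (k : Type) [Field k] {n : ℕ}

variable {k : Type} [Field k] {n : ℕ}

/-- Sign of `v` relative to `F`. -/
def sgn (k : Type) [Field k] (v : Fin n) (F : Finset (Fin n)) : k :=
  (-1) ^ (F.filter (fun y => y < v)).card

lemma sgn_mul_self (v : Fin n) (F : Finset (Fin n)) : sgn k v F * sgn k v F = 1 := by
  rw [sgn, ← mul_pow, neg_mul_neg, one_mul, one_pow]

lemma sgn_ne_zero (v : Fin n) (F : Finset (Fin n)) : sgn k v F ≠ 0 := by
  intro h
  have := sgn_mul_self (k := k) v F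
  rw [h, mul_zero] at this
  exact one_ne_zero this.symm

/-- Total (degree-less) boundary operator on arbitrary functions. -/
noncomputable def DD (f : Finset (Fin n) → k) : Finset (Fin n) → k := fun G =>
  ∑ x : Fin n, if x ∉ G then (-1 : k) ^ (G.filter (fun y => y < x)).card * f (insert x G) else 0

/-- Join with vertex `v`. -/
noncomputable def JJ (v : Fin n) (f : Finset (Fin n) → k) : Finset (Fin n) → k := fun G =>
  if v ∈ G then sgn k v (G.erase v) * f (G.erase v) else 0

/-- Extract the `v`-component. -/
noncomputable def SSm (v : Fin n) (f : Finset (Fin n) → k) : Finset (Fin n) → k := fun F =>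
  if v ∈ F then 0 else sgn k v F * f (insert v F)

/-- Restrict to `v`-free part. -/
noncomputable def RR (v : Fin n) (f : Finset (Fin n) → k) : Finset (Fin n) → k := fun G =>
  if v ∈ G then 0 else f G

/-- `f` is supported on `v`-free sets. -/
def VF (v : Fin n) (f : Finset (Fin n) → k) : Prop := ∀ G, v ∈ G → f G = 0

lemma VF_SSm (v : Fin n) (f : Finset (Fin n) → k) : VF v (SSm v f) :=
  fun G hG => by simp [SSm, hG]

lemma VF_RR (v : Fin n) (f : Finset (Fin n) → k) : VF v (RR v f) :=
  fun G hG => by simp [RR, hG]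

lemma VF_DD {v : Fin n} {f : Finset (Fin n) → k} (hf : VF v f) : VF v (DD f) := by
  intro G hG
  refine Finset.sum_eq_zero fun x _ => ?_
  by_cases h : x ∉ G
  · rw [if_pos h, hf _ (mem_insert_of_mem hG), mul_zero]
  · rw [if_neg h]

lemma VF_add {v : Fin n} {f g : Finset (Fin n) → k} (hf : VF v f) (hg : VF v g) :
    VF v (f + g) := fun G hG => by simp [Pi.add_apply, hf G hG, hg G hG]

lemma VF_neg {v : Fin n} {f : Finset (Fin n) → k} (hf : VF v f) : VF v (-f) :=
  fun G hG => by simp [Pi.neg_apply, hf G hG]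

lemma RR_eq_self {v : Fin n} {f : Finset (Fin n) → k} (hf : VF v f) : RR v f = f := by
  funext G
  by_cases h : v ∈ G
  · rw [RR, if_pos h, hf G h]
  · rw [RR, if_neg h]

lemma DD_add (f g : Finset (Fin n) → k) : DD (f + g) = DD f + DD g := by
  funext G
  rw [Pi.add_apply, DD, DD, DD, ← Finset.sum_add_distrib]
  refine Finset.sum_congr rfl fun x _ => ?_
  by_cases h : x ∉ G
  · rw [if_pos h, if_pos h, if_pos h, Pi.add_apply]; ring
  · rw [if_neg h, if_neg h, if_neg h, add_zero]

lemma DD_sub (f g : Finset (Fin n) → k) : DD (f - g) = DD f - DD g := by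
  funext G
  rw [Pi.sub_apply, DD, DD, DD, ← Finset.sum_sub_distrib]
  refine Finset.sum_congr rfl fun x _ => ?_
  by_cases h : x ∉ G
  · rw [if_pos h, if_pos h, if_pos h, Pi.sub_apply]; ring
  · rw [if_neg h, if_neg h, if_neg h, sub_zero]

lemma DD_zero : DD (0 : Finset (Fin n) → k) = 0 := by
  funext G
  refine Finset.sum_eq_zero fun x _ => ?_
  split_ifs <;> simp

lemma JJ_neg (v : Fin n) (f : Finset (Fin n) → k) : JJ v (-f) = -(JJ v f) := by
  funext G
  by_cases h : v ∈ G <;> simp [JJ, h]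

lemma JJ_zero (v : Fin n) : JJ v (0 : Finset (Fin n) → k) = 0 := by
  funext G
  by_cases h : v ∈ G <;> simp [JJ, h]

/-- Decomposition of a chain into `v`-free and `v`-parts. -/
lemma K2 (v : Fin n) (f : Finset (Fin n) → k) : f = RR v f + JJ v (SSm v f) := by
  funext G
  by_cases h : v ∈ G
  · have hv' : v ∉ G.erase v := notMem_erase v G
    rw [Pi.add_apply, RR, if_pos h, JJ, if_pos h, SSm, if_neg hv', insert_erase h, zero_add,
      ← mul_assoc, sgn_mul_self, one_mul]
  · rw [Pi.add_apply, RR, if_neg h, JJ, if_neg h, add_zero]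

lemma K3 {v : Fin n} {f : Finset (Fin n) → k} (hf : VF v f) : SSm v (JJ v f) = f := by
  funext F
  by_cases h : v ∈ F
  · rw [SSm, if_pos h, hf F h]
  · rw [SSm, if_neg h, JJ, if_pos (mem_insert_self v F), erase_insert h, ← mul_assoc,
      sgn_mul_self, one_mul]

/-- The key boundary identity : `∂(v⋆f) + v⋆(∂f) = f` for `v`-free `f`. -/
lemma K1 {v : Fin n} {f : Finset (Fin n) → k} (hf : VF v f) :
    DD (JJ v f) + JJ v (DD f) = f := by
  funext G
  by_cases hv : v ∈ G
  · -- everything cancels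
    have hfG : f G = 0 := hf G hv
    rw [Pi.add_apply, JJ, if_pos hv, DD, DD, Finset.mul_sum, ← Finset.sum_add_distrib, hfG]
    refine Finset.sum_eq_zero fun x _ => ?_
    by_cases hx : x ∈ G
    · rw [if_neg (not_not_intro hx)]
      rcases eq_or_ne x v with rfl | hxv
      · rw [if_pos (notMem_erase x G), insert_erase hv, hfG, mul_zero, mul_zero, zero_add]
      · rw [if_neg (not_not_intro (mem_erase.2 ⟨hxv, hx⟩)), mul_zero, zero_add]
    · have hxv : x ≠ v := fun h => hx (h ▸ hv)
      have hxG' : x ∉ G.erase v := fun h => hx (mem_of_mem_erase h)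
      rw [if_pos hx, if_pos hxG', JJ, if_pos (mem_insert_of_mem hv), erase_insert_of_ne hxv]
      have hG : G = insert v (G.erase v) := (insert_erase hv).symm
      have hvG' : v ∉ G.erase v := notMem_erase v G
      set G' := G.erase v with hG'def
      have ha : (G.filter (fun y => y < x)).card =
          (G'.filter (fun y => y < x)).card + (if v < x then 1 else 0) := by
        rw [hG, filter_insert]
        split_ifs with h
        · rw [card_insert_of_notMem (fun hc => hvG' (mem_filter.1 hc).1)]
        · rfl
      have hb : ((insert x G').filter (fun y => y < v)).card =
          (G'.filter (fun y => y < v)).card + (if x < v then 1 else 0) := by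
        rw [filter_insert]
        split_ifs with h
        · rw [card_insert_of_notMem (fun hc => hxG' (mem_filter.1 hc).1)]
        · rfl
      rw [sgn, sgn, ha, hb]
      rcases hxv.lt_or_gt with hlt | hlt
      · rw [if_neg (asymm hlt), if_pos hlt, add_zero, pow_succ]
        ring
      · rw [if_pos hlt, if_neg (asymm hlt), add_zero, pow_succ]
        ring
  · rw [Pi.add_apply, JJ, if_neg hv, add_zero, DD]
    rw [Finset.sum_eq_single v]
    · rw [if_pos hv, JJ, if_pos (mem_insert_self v G), erase_insert hv, ← sgn, ← mul_assoc,
        sgn_mul_self, one_mul]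
    · intro b _ hb
      by_cases h : b ∉ G
      · rw [if_pos h]
        have : v ∉ insert b G := by simp only [mem_insert]; rintro (e | e); exacts [hb e.symm, hv e]
        rw [JJ]
        simp only [if_neg this, mul_zero]
      · rw [if_neg h]
    · intro h
      exact absurd (mem_univ v) h

/-- Splitting an identity into `v`-free and `v`-components. -/
lemma split_eq {v : Fin n} {a₁ a₂ b₁ b₂ : Finset (Fin n) → k}
    (ha₁ : VF v a₁) (ha₂ : VF v a₂) (hb₁ : VF v b₁) (hb₂ : VF v b₂)
    (h : a₁ + JJ v b₁ = a₂ + JJ v b₂) : a₁ = a₂ ∧ b₁ = b₂ := by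
  constructor
  · funext G
    by_cases hv : v ∈ G
    · rw [ha₁ G hv, ha₂ G hv]
    · have := congrFun h G
      rwa [Pi.add_apply, Pi.add_apply, JJ, if_neg hv, JJ, if_neg hv, add_zero, add_zero] at this
  · funext F
    by_cases hv : v ∈ F
    · rw [hb₁ F hv, hb₂ F hv]
    · have := congrFun h (insert v F)
      have hmem : v ∈ insert v F := mem_insert_self v F
      rw [Pi.add_apply, Pi.add_apply, ha₁ _ hmem, ha₂ _ hmem, zero_add, zero_add,
        JJ, if_pos hmem, JJ, if_pos hmem, erase_insert hv] at this
      exact mul_left_cancel₀ (sgn_ne_zero v F) this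

-- continuation

variable {k : Type} [Field k] {n : ℕ}

/-- Support condition: `f` vanishes outside faces of `Δ` of cardinality `m`. -/
def sSupp (Δ : Set (Finset (Fin n))) (m : ℤ) (f : Finset (Fin n) → k) : Prop :=
  ∀ G, f G ≠ 0 → G ∈ Δ ∧ (G.card : ℤ) = m

/-- Deletion of a vertex. -/
def delC (Γ : Set (Finset (Fin n))) (v : Fin n) : Set (Finset (Fin n)) :=
  {F | F ∈ Γ ∧ v ∉ F}

/-- Link of a vertex. -/
def lkC (Γ : Set (Finset (Fin n))) (v : Fin n) : Set (Finset (Fin n)) :=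
  {F | v ∉ F ∧ insert v F ∈ Γ}

lemma lkC_subset_delC {Γ : Set (Finset (Fin n))} (hΓ : IsComplex Γ) (v : Fin n) :
    lkC Γ v ⊆ delC Γ v := fun F hF =>
  ⟨hΓ _ hF.2 _ (subset_insert v F), hF.1⟩

lemma delC_subset {Γ : Set (Finset (Fin n))} (v : Fin n) : delC Γ v ⊆ Γ := fun _ h => h.1

lemma sSupp_mono {Δ₁ Δ₂ : Set (Finset (Fin n))} {m : ℤ} {f : Finset (Fin n) → k}
    (h : Δ₁ ⊆ Δ₂) (hf : sSupp Δ₁ m f) : sSupp Δ₂ m f :=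
  fun G hG => ⟨h (hf G hG).1, (hf G hG).2⟩

lemma sSupp_of_eq {Δ : Set (Finset (Fin n))} {m m' : ℤ} {f : Finset (Fin n) → k}
    (h : m = m') (hf : sSupp Δ m f) : sSupp Δ m' f := h ▸ hf

lemma sSupp_add {Δ : Set (Finset (Fin n))} {m : ℤ} {f g : Finset (Fin n) → k}
    (hf : sSupp Δ m f) (hg : sSupp Δ m g) : sSupp Δ m (f + g) := by
  intro G hG
  by_cases h : f G ≠ 0
  · exact hf G h
  · push_neg at h
    refine hg G fun hg0 => hG ?_
    rw [Pi.add_apply, h, hg0, add_zero]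

lemma sSupp_sub {Δ : Set (Finset (Fin n))} {m : ℤ} {f g : Finset (Fin n) → k}
    (hf : sSupp Δ m f) (hg : sSupp Δ m g) : sSupp Δ m (f - g) := by
  intro G hG
  by_cases h : f G ≠ 0
  · exact hf G h
  · push_neg at h
    refine hg G fun hg0 => hG ?_
    rw [Pi.sub_apply, h, hg0, sub_zero]

lemma sSupp_DD {Δ : Set (Finset (Fin n))} (hΔ : IsComplex Δ) {m : ℤ}
    {f : Finset (Fin n) → k} (hf : sSupp Δ m f) : sSupp Δ (m - 1) (DD f) := by
  intro G hG
  rw [DD] at hG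
  obtain ⟨x, -, hx⟩ := Finset.exists_ne_zero_of_sum_ne_zero hG
  have hx1 : x ∉ G := by
    by_contra hc
    rw [if_neg (not_not_intro hc)] at hx
    exact hx rfl
  rw [if_pos hx1] at hx
  have hfx : f (insert x G) ≠ 0 := fun h0 => hx (by rw [h0, mul_zero])
  obtain ⟨hmem, hcard⟩ := hf _ hfx
  refine ⟨hΔ _ hmem _ (subset_insert x G), ?_⟩
  rw [card_insert_of_notMem hx1] at hcard
  push_cast at hcard ⊢
  omega

lemma sSupp_SSm {Γ : Set (Finset (Fin n))} {v : Fin n} {m : ℤ} {f : Finset (Fin n) → k}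
    (hf : sSupp Γ m f) : sSupp (lkC Γ v) (m - 1) (SSm v f) := by
  intro F hF
  rw [SSm] at hF
  have hv : v ∉ F := by
    by_contra hc
    rw [if_pos hc] at hF
    exact hF rfl
  rw [if_neg hv] at hF
  have hfx : f (insert v F) ≠ 0 := fun h0 => hF (by rw [h0, mul_zero])
  obtain ⟨hmem, hcard⟩ := hf _ hfx
  refine ⟨⟨hv, hmem⟩, ?_⟩
  rw [card_insert_of_notMem hv] at hcard
  push_cast at hcard ⊢
  omega

lemma sSupp_JJ {Γ : Set (Finset (Fin n))} {v : Fin n} {m : ℤ} {f : Finset (Fin n) → k}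
    (hf : sSupp (lkC Γ v) m f) : sSupp Γ (m + 1) (JJ v f) := by
  intro G hG
  rw [JJ] at hG
  have hv : v ∈ G := by
    by_contra hc
    rw [if_neg hc] at hG
    exact hG rfl
  rw [if_pos hv] at hG
  have hfx : f (G.erase v) ≠ 0 := fun h0 => hG (by rw [h0, mul_zero])
  obtain ⟨hmem, hcard⟩ := hf _ hfx
  have h1 : insert v (G.erase v) = G := insert_erase hv
  refine ⟨h1 ▸ hmem.2, ?_⟩
  have hpos : 0 < G.card := card_pos.2 ⟨v, hv⟩
  have : G.card = (G.erase v).card + 1 := by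
    rw [card_erase_of_mem hv]
    omega
  push_cast [this]
  omega

lemma sSupp_RR {Γ : Set (Finset (Fin n))} {v : Fin n} {m : ℤ} {f : Finset (Fin n) → k}
    (hf : sSupp Γ m f) : sSupp (delC Γ v) m (RR v f) := by
  intro G hG
  rw [RR] at hG
  have hv : v ∉ G := by
    by_contra hc
    rw [if_pos hc] at hG
    exact hG rfl
  rw [if_neg hv] at hG
  exact ⟨⟨(hf G hG).1, hv⟩, (hf G hG).2⟩

lemma VF_of_sSupp {Δ' : Set (Finset (Fin n))} {v : Fin n} {m : ℤ} {f : Finset (Fin n) → k}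
    (hΔ' : ∀ F ∈ Δ', v ∉ F) (hf : sSupp Δ' m f) : VF v f := by
  intro G hG
  by_contra h0
  exact hΔ' G (hf G h0).1 hG

/-- Nonvanishing of reduced homology in degree `p`, at the level of total chains. -/
def NZ (k : Type) [Field k] {n : ℕ} (Δ : Set (Finset (Fin n))) (p : ℤ) : Prop :=
  ∃ g : Finset (Fin n) → k, sSupp Δ (p + 1) g ∧ DD g = 0 ∧
    ∀ u : Finset (Fin n) → k, sSupp Δ (p + 2) u → DD u ≠ g

lemma vfree_delC {Γ : Set (Finset (Fin n))} (v : Fin n) : ∀ F ∈ delC Γ v, v ∉ F :=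
  fun _ hF => hF.2

lemma vfree_lkC {Γ : Set (Finset (Fin n))} (v : Fin n) : ∀ F ∈ lkC Γ v, v ∉ F :=
  fun _ hF => hF.1

/-- First Mayer–Vietoris fact: nontrivial homology of `Γ` forces nontrivial homology of the
deletion (same degree) or of the link (one degree down). -/
theorem fact1 {Γ : Set (Finset (Fin n))} (hΓ : IsComplex Γ) (v : Fin n) (p : ℤ)
    (h : NZ k Γ p) : NZ k (delC Γ v) p ∨ NZ k (lkC Γ v) (p - 1) := by
  obtain ⟨g, hgs, hgd, hgb⟩ := h
  set g₁ := SSm v g with hg₁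
  have hg₁s : sSupp (lkC Γ v) (p + 1 - 1) g₁ := sSupp_SSm hgs
  have hg₁vf : VF v g₁ := VF_SSm v g
  -- key equation from DD g = 0
  have hK2 : g = RR v g + JJ v g₁ := K2 v g
  have heq : (DD (RR v g) + g₁) + JJ v (-(DD g₁)) = 0 + JJ v 0 := by
    rw [JJ_neg, JJ_zero, add_zero]
    have : DD g = DD (RR v g) + (g₁ - JJ v (DD g₁)) := by
      conv_lhs => rw [hK2]
      rw [DD_add]
      have := K1 hg₁vf
      have h1 : DD (JJ v g₁) = g₁ - JJ v (DD g₁) := by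
        rw [eq_sub_iff_add_eq]
        exact this
      rw [h1]
    rw [hgd] at this
    have := this.symm
    funext G
    have hG := congrFun this G
    simp only [Pi.add_apply, Pi.sub_apply, Pi.neg_apply, Pi.zero_apply, JJ_neg] at hG ⊢
    linear_combination hG
  have hsplit := split_eq (VF_add (VF_DD (VF_RR v g)) hg₁vf) (fun G _ => rfl)
    (VF_neg (VF_DD hg₁vf)) (fun G _ => rfl) heq
  have hDRg : DD (RR v g) + g₁ = 0 := hsplit.1
  have hDg₁ : DD g₁ = 0 := by
    have := hsplit.2
    funext G
    have := congrFun this G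
    simp only [Pi.neg_apply, Pi.zero_apply, neg_eq_zero] at this
    exact this
  by_cases hcase : ∃ w : Finset (Fin n) → k, sSupp (lkC Γ v) (p + 1) w ∧ DD w = g₁
  · -- the link class is a boundary; produce a class in the deletion
    obtain ⟨w, hws, hwd⟩ := hcase
    have hwvf : VF v w := VF_of_sSupp (vfree_lkC v) hws
    left
    refine ⟨RR v g + w, ?_, ?_, ?_⟩
    · exact sSupp_add (sSupp_RR hgs) (sSupp_mono (lkC_subset_delC hΓ v) hws)
    · rw [DD_add, hwd]
      have h2 : DD (RR v g) = -g₁ := eq_neg_of_add_eq_zero_left hDRg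
      rw [h2, neg_add_cancel]
    · intro u hus hud
      apply hgb (u - JJ v w)
      · refine sSupp_sub (sSupp_mono (fun F hF => hF.1) hus) ?_
        exact sSupp_of_eq (by ring) (sSupp_JJ hws)
      · rw [DD_sub, hud]
        have hK1w : DD (JJ v w) = w - JJ v (DD w) := by
          rw [eq_sub_iff_add_eq]; exact K1 hwvf
        rw [hK1w, hwd]
        conv_rhs => rw [hK2]
        funext G
        simp only [Pi.sub_apply, Pi.add_apply]
        ring
  · right
    push_neg at hcase
    refine ⟨g₁, sSupp_of_eq (by ring) hg₁s, hDg₁, ?_⟩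
    intro u hus
    exact hcase u (sSupp_of_eq (by ring) hus)

/-- Second Mayer–Vietoris fact: nontrivial homology of the deletion forces nontrivial homology
of the whole complex or of the link, in the same degree. -/
theorem fact2 {Γ : Set (Finset (Fin n))} (hΓ : IsComplex Γ) (v : Fin n) (q : ℤ)
    (h : NZ k (delC Γ v) q) : NZ k Γ q ∨ NZ k (lkC Γ v) q := by
  obtain ⟨g, hgs, hgd, hgb⟩ := h
  have hgvf : VF v g := VF_of_sSupp (vfree_delC v) hgs
  by_cases hcase : ∃ u : Finset (Fin n) → k, sSupp Γ (q + 2) u ∧ DD u = g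
  · right
    obtain ⟨u, hus, hud⟩ := hcase
    set u₁ := SSm v u with hu₁
    have hu₁s : sSupp (lkC Γ v) (q + 2 - 1) u₁ := sSupp_SSm hus
    have hu₁vf : VF v u₁ := VF_SSm v u
    have heq : (DD (RR v u) + u₁) + JJ v (-(DD u₁)) = g + JJ v 0 := by
      rw [JJ_neg, JJ_zero, add_zero]
      have hdu : DD u = DD (RR v u) + (u₁ - JJ v (DD u₁)) := by
        conv_lhs => rw [K2 v u]
        rw [DD_add]
        have h1 : DD (JJ v u₁) = u₁ - JJ v (DD u₁) := by
          rw [eq_sub_iff_add_eq]; exact K1 hu₁vf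
        rw [h1]
      rw [hud] at hdu
      funext G
      have hG := congrFun hdu G
      simp only [Pi.add_apply, Pi.sub_apply, Pi.neg_apply, JJ_neg] at hG ⊢
      linear_combination -hG
    have hsplit := split_eq (VF_add (VF_DD (VF_RR v u)) hu₁vf) hgvf
      (VF_neg (VF_DD hu₁vf)) (fun G _ => rfl) heq
    have hmain : DD (RR v u) + u₁ = g := hsplit.1
    have hDu₁ : DD u₁ = 0 := by
      funext G
      have := congrFun hsplit.2 G
      simp only [Pi.neg_apply, Pi.zero_apply, neg_eq_zero] at this
      exact this
    by_cases hcase2 : ∃ t : Finset (Fin n) → k, sSupp (lkC Γ v) (q + 2) t ∧ DD t = u₁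
    · obtain ⟨t, hts, htd⟩ := hcase2
      exfalso
      apply hgb (RR v u + t)
      · refine sSupp_add ?_ (sSupp_mono (lkC_subset_delC hΓ v) hts)
        exact sSupp_RR hus
      · rw [DD_add, htd, hmain]
    · push_neg at hcase2
      refine ⟨u₁, sSupp_of_eq (by ring) hu₁s, hDu₁, ?_⟩
      intro t hts
      exact hcase2 t hts
  · left
    push_neg at hcase
    exact ⟨g, sSupp_mono (delC_subset v) hgs, hgd, fun u hus => hcase u hus⟩


variable {k : Type} [Field k] {n : ℕ}

open Classical in
/-- Extension by zero of a graded chain to a total chain. -/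
noncomputable def toT (Δ : Set (Finset (Fin n))) (p : ℤ) (f : Chains k Δ p) :
    Finset (Fin n) → k := fun G =>
  if h : G ∈ Δ ∧ (G.card : ℤ) = p + 1 then f ⟨G, h⟩ else 0

lemma sSupp_toT (Δ : Set (Finset (Fin n))) (p : ℤ) (f : Chains k Δ p) :
    sSupp Δ (p + 1) (toT Δ p f) := by
  intro G hG
  rw [toT] at hG
  by_cases h : G ∈ Δ ∧ (G.card : ℤ) = p + 1
  · exact h
  · rw [dif_neg h] at hG
    exact absurd rfl hG

lemma toT_inj {Δ : Set (Finset (Fin n))} {p : ℤ} {f g : Chains k Δ p}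
    (h : toT Δ p f = toT Δ p g) : f = g := by
  funext F
  have := congrFun h F.1
  rw [toT, toT, dif_pos F.2, dif_pos F.2] at this
  exact this

lemma toT_zero (Δ : Set (Finset (Fin n))) (p : ℤ) : toT Δ p (0 : Chains k Δ p) = 0 := by
  funext G
  rw [toT]
  split_ifs <;> rfl

lemma toT_ofT {Δ : Set (Finset (Fin n))} {p : ℤ} {g : Finset (Fin n) → k}
    (hg : sSupp Δ (p + 1) g) : toT Δ p (fun F => g F.1) = g := by
  funext G
  rw [toT]
  by_cases h : G ∈ Δ ∧ (G.card : ℤ) = p + 1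
  · rw [dif_pos h]
  · rw [dif_neg h]
    by_contra h0
    exact h (hg G fun h1 => h0 h1.symm)

lemma toT_congr {Δ : Set (Finset (Fin n))} {p q : ℤ} (h : p = q) (f : Chains k Δ p) :
    toT Δ q ((chainsCongr k Δ h) f) = toT Δ p f := by
  subst h
  rfl

/-- The total boundary agrees with the graded boundary. -/
lemma DD_toT {Δ : Set (Finset (Fin n))} (hΔ : IsComplex Δ) (p : ℤ) (f : Chains k Δ p) :
    DD (toT Δ p f) = toT Δ (p - 1) (boundary k Δ p f) := by
  funext G
  by_cases h : G ∈ Δ ∧ (G.card : ℤ) = (p - 1) + 1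
  · rw [toT, dif_pos h]
    show _ = boundaryFun k Δ p f ⟨G, h⟩
    rw [boundaryFun, DD]
    refine Finset.sum_congr rfl fun x _ => ?_
    by_cases hx : x ∉ G
    · rw [if_pos hx]
      by_cases hm : insert x G ∈ Δ
      · have hc : ((insert x G).card : ℤ) = p + 1 := by
          rw [card_insert_of_notMem hx]
          push_cast
          omega
        rw [toT, dif_pos ⟨hm, hc⟩, dif_pos ⟨hx, hm⟩]
      · rw [toT, dif_neg (fun hh => hm hh.1), dif_neg (fun hh : x ∉ G ∧ insert x G ∈ Δ => hm hh.2),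
          mul_zero]
    · rw [if_neg hx, dif_neg (fun hh : x ∉ G ∧ insert x G ∈ Δ => hx hh.1)]
  · rw [toT, dif_neg h, DD]
    refine Finset.sum_eq_zero fun x _ => ?_
    by_cases hx : x ∉ G
    · rw [if_pos hx, toT]
      rw [dif_neg, mul_zero]
      rintro ⟨hm, hc⟩
      refine h ⟨hΔ _ hm _ (subset_insert x G), ?_⟩
      rw [card_insert_of_notMem hx] at hc
      push_cast at hc ⊢
      omega
    · rw [if_neg hx]

/-- Translation: nontriviality of reduced homology equals the total-chain condition `NZ`. -/
theorem nz_iff {Δ : Set (Finset (Fin n))} (hΔ : IsComplex Δ) (p : ℤ) :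
    ¬ Subsingleton (ReducedHomology k Δ p) ↔ NZ k Δ p := by
  rw [Submodule.Quotient.subsingleton_iff]
  constructor
  · intro hne
    have : ¬ ∀ z : ↥(cycles k Δ p),
        z ∈ Submodule.comap (cycles k Δ p).subtype (boundaries k Δ p) := by
      rw [← Submodule.eq_top_iff']
      exact hne
    obtain ⟨z, hz⟩ := not_forall.1 this
    rw [Submodule.mem_comap, Submodule.subtype_apply] at hz
    have hzc : boundary k Δ p z.1 = 0 := LinearMap.mem_ker.1 z.2
    refine ⟨toT Δ p z.1, sSupp_toT Δ p z.1, ?_, ?_⟩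
    · rw [DD_toT hΔ, hzc, toT_zero]
    · intro u hus hud
      apply hz
      rw [boundaries, LinearMap.mem_range]
      refine ⟨fun F => u F.1, ?_⟩
      apply toT_inj (Δ := Δ) (p := p)
      rw [LinearMap.comp_apply, LinearEquiv.coe_coe, toT_congr, ← DD_toT hΔ,
        toT_ofT (sSupp_of_eq (by ring) hus)]
      exact hud
  · rintro ⟨g, hgs, hgd, hgb⟩ htop
    set z : Chains k Δ p := fun F => g F.1 with hzdef
    have hzc : boundary k Δ p z = 0 := by
      apply toT_inj (Δ := Δ) (p := p - 1)
      rw [← DD_toT hΔ, toT_ofT hgs, hgd, toT_zero]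
    have hzmem : z ∈ cycles k Δ p := LinearMap.mem_ker.2 hzc
    have := Submodule.eq_top_iff'.1 htop ⟨z, hzmem⟩
    rw [Submodule.mem_comap, Submodule.subtype_apply] at this
    rw [boundaries, LinearMap.mem_range] at this
    obtain ⟨U, hU⟩ := this
    apply hgb (toT Δ (p + 1) U)
    · exact sSupp_of_eq (by ring) (sSupp_toT Δ (p + 1) U)
    · rw [DD_toT hΔ]
      calc toT Δ (p + 1 - 1) (boundary k Δ (p + 1) U)
          = toT Δ p ((chainsCongr k Δ (show p + 1 - 1 = p by ring)) (boundary k Δ (p + 1) U)) :=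
            (toT_congr _ _).symm
        _ = toT Δ p z := by
            rw [LinearMap.comp_apply, LinearEquiv.coe_coe] at hU
            rw [hU]
        _ = g := toT_ofT hgs

variable {k : Type} [Field k] {n : ℕ}

lemma IsComplex_sub {Δ : Set (Finset (Fin n))} (hΔ : IsComplex Δ) (R S : Finset (Fin n)) :
    IsComplex (sub Δ R S) := by
  rintro F ⟨hFR, hFS⟩ G hGF
  exact ⟨hGF.trans hFR, hΔ _ hFS _ (union_subset_union_left hGF)⟩

lemma IsComplex_link {Δ : Set (Finset (Fin n))} (hΔ : IsComplex Δ) (S : Finset (Fin n)) :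
    IsComplex (link Δ S) := by
  rintro F ⟨hFd, hFS⟩ G hGF
  exact ⟨Finset.disjoint_of_subset_left hGF hFd, hΔ _ hFS _ (union_subset_union_left hGF)⟩

lemma delC_sub (Δ : Set (Finset (Fin n))) (R S : Finset (Fin n)) (v : Fin n) :
    delC (sub Δ R S) v = sub Δ (R.erase v) S := by
  ext F
  constructor
  · rintro ⟨⟨hFR, hFS⟩, hv⟩
    exact ⟨subset_erase.2 ⟨hFR, hv⟩, hFS⟩
  · rintro ⟨hFR, hFS⟩
    obtain ⟨h1, h2⟩ := subset_erase.1 hFR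
    exact ⟨⟨h1, hFS⟩, h2⟩

lemma lkC_sub (Δ : Set (Finset (Fin n))) {R : Finset (Fin n)} (S : Finset (Fin n))
    {v : Fin n} (hv : v ∈ R) :
    lkC (sub Δ R S) v = sub Δ (R.erase v) (insert v S) := by
  ext F
  constructor
  · rintro ⟨hvF, hFR, hFS⟩
    refine ⟨subset_erase.2 ⟨(subset_insert v F).trans hFR, hvF⟩, ?_⟩
    rwa [union_insert, ← insert_union]
  · rintro ⟨hFR, hFS⟩
    obtain ⟨h1, h2⟩ := subset_erase.1 hFR
    refine ⟨h2, insert_subset hv h1, ?_⟩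
    rwa [insert_union, ← union_insert]

lemma delC_sub_insert (Δ : Set (Finset (Fin n))) {R : Finset (Fin n)} (S : Finset (Fin n))
    {w : Fin n} (hw : w ∉ R) :
    delC (sub Δ (insert w R) S) w = sub Δ R S := by
  ext F
  constructor
  · rintro ⟨⟨hFR, hFS⟩, hv⟩
    exact ⟨(subset_insert_iff_of_notMem hv).1 hFR, hFS⟩
  · rintro ⟨hFR, hFS⟩
    exact ⟨⟨hFR.trans (subset_insert w R), hFS⟩, fun hc => hw (hFR hc)⟩

lemma lkC_sub_insert (Δ : Set (Finset (Fin n))) {R : Finset (Fin n)} (S : Finset (Fin n))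
    {w : Fin n} (hw : w ∉ R) :
    lkC (sub Δ (insert w R) S) w = sub Δ R (insert w S) := by
  ext F
  constructor
  · rintro ⟨hvF, hFR, hFS⟩
    refine ⟨?_, ?_⟩
    · intro a ha
      rcases mem_insert.1 (hFR (mem_insert_of_mem ha)) with rfl | h
      · exact absurd ha hvF
      · exact h
    · rwa [union_insert, ← insert_union]
  · rintro ⟨hFR, hFS⟩
    have hvF : w ∉ F := fun hc => hw (hFR hc)
    refine ⟨hvF, insert_subset_insert w hFR, ?_⟩
    rwa [insert_union, ← union_insert]

lemma link_eq_sub (Δ : Set (Finset (Fin n))) (S : Finset (Fin n)) :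
    link Δ S = sub Δ Sᶜ S := by
  ext F
  have : Disjoint F S ↔ F ⊆ Sᶜ := by
    constructor
    · intro h a ha
      exact mem_compl.2 (Finset.disjoint_left.1 h ha)
    · intro h
      exact Finset.disjoint_left.2 fun a ha => mem_compl.1 (h ha)
  constructor
  · rintro ⟨h1, h2⟩; exact ⟨this.1 h1, h2⟩
  · rintro ⟨h1, h2⟩; exact ⟨this.2 h1, h2⟩

lemma not_NZ_of_no_faces {Δ : Set (Finset (Fin n))} {p : ℤ}
    (h : ∀ F ∈ Δ, (F.card : ℤ) ≠ p + 1) : ¬ NZ k Δ p := by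
  rintro ⟨g, hgs, hgd, hgb⟩
  have hg0 : g = 0 := by
    funext G
    by_contra h0
    exact h G (hgs G h0).1 (hgs G h0).2
  exact hgb 0 (fun G hG => absurd rfl hG) (by rw [DD_zero, hg0])

lemma not_NZ_sub_empty {Δ : Set (Finset (Fin n))} (S : Finset (Fin n)) {p : ℤ} (hp : 0 ≤ p) :
    ¬ NZ k (sub Δ ∅ S) p := by
  refine not_NZ_of_no_faces fun F hF => ?_
  have : F = ∅ := subset_empty.1 hF.1
  subst this
  simp only [card_empty, Nat.cast_zero]
  omega

/-- Key lemma: homology of `Δ^{S,T}` in any degree is detected by the homology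
of a link of a larger set, in the same degree. -/
lemma lemB {Δ : Set (Finset (Fin n))} (hΔ : IsComplex Δ) (q : ℤ) :
    ∀ c : ℕ, ∀ R S : Finset (Fin n), Disjoint R S → ((R ∪ S)ᶜ).card ≤ c →
      NZ k (sub Δ R S) q → ∃ S', S ⊆ S' ∧ NZ k (link Δ S') q := by
  have hterm : ∀ R S : Finset (Fin n), Disjoint R S → (R ∪ S)ᶜ = ∅ →
      sub Δ R S = link Δ S := by
    intro R S hdis hfull
    have hR : R = Sᶜ := by
      ext a
      constructor
      · intro ha
        exact mem_compl.2 (Finset.disjoint_left.1 hdis ha)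
      · intro ha
        have : a ∈ R ∪ S := by
          rw [(compl_eq_empty_iff _).1 hfull]
          exact mem_univ a
        rcases mem_union.1 this with h | h
        · exact h
        · exact absurd h (mem_compl.1 ha)
    rw [link_eq_sub, hR]
  intro c
  induction c with
  | zero =>
    intro R S hdis hcard hnz
    have hfull : (R ∪ S)ᶜ = ∅ := card_eq_zero.1 (Nat.le_zero.1 hcard)
    exact ⟨S, subset_rfl, by rwa [← hterm R S hdis hfull]⟩
  | succ c ih =>
    intro R S hdis hcard hnz
    by_cases hfull : (R ∪ S)ᶜ = ∅
    · exact ⟨S, subset_rfl, by rwa [← hterm R S hdis hfull]⟩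
    · obtain ⟨w, hw⟩ := nonempty_iff_ne_empty.2 hfull
      have hwRS : w ∉ R ∪ S := mem_compl.1 hw
      have hwR : w ∉ R := fun h => hwRS (mem_union_left S h)
      have hwS : w ∉ S := fun h => hwRS (mem_union_right R h)
      have hnz' : NZ k (delC (sub Δ (insert w R) S) w) q := by
        rwa [delC_sub_insert Δ S hwR]
      rcases fact2 (IsComplex_sub hΔ (insert w R) S) w q hnz' with h1 | h2
      · refine ih (insert w R) S ?_ ?_ h1
        · rw [Finset.disjoint_left]
          intro a ha haS
          rcases mem_insert.1 ha with rfl | h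
          · exact hwS haS
          · exact Finset.disjoint_left.1 hdis h haS
        · rw [insert_union, compl_insert, card_erase_of_mem hw]
          omega
      · rw [lkC_sub_insert Δ S hwR] at h2
        have hd2 : Disjoint R (insert w S) := by
          rw [Finset.disjoint_left]
          intro a ha haS
          rcases mem_insert.1 haS with rfl | h
          · exact hwR ha
          · exact Finset.disjoint_left.1 hdis ha h
        have hc2 : ((R ∪ insert w S)ᶜ).card ≤ c := by
          rw [union_insert, compl_insert, card_erase_of_mem hw]
          omega
        obtain ⟨S', hS1, hS2⟩ := ih R (insert w S) hd2 hc2 h2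
        exact ⟨S', (subset_insert w S).trans hS1, hS2⟩

/-- Main induction. -/
lemma mainK {Δ : Set (Finset (Fin n))} (hΔ : IsComplex Δ) (p : ℤ) (hp : 0 ≤ p) :
    ∀ m : ℕ, ∀ R S : Finset (Fin n), Disjoint R S → R.card ≤ m →
      NZ k (sub Δ R S) p → ∃ S', S ⊂ S' ∧ NZ k (link Δ S') (p - 1) := by
  intro m
  induction m with
  | zero =>
    intro R S hdis hcard hnz
    have hR : R = ∅ := card_eq_zero.1 (Nat.le_zero.1 hcard)
    subst hR
    exact absurd hnz (not_NZ_sub_empty S hp)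
  | succ m ih =>
    intro R S hdis hcard hnz
    rcases R.eq_empty_or_nonempty with rfl | ⟨v, hv⟩
    · exact absurd hnz (not_NZ_sub_empty S hp)
    · have hvS : v ∉ S := Finset.disjoint_left.1 hdis hv
      rcases fact1 (IsComplex_sub hΔ R S) v p hnz with h1 | h2
      · rw [delC_sub] at h1
        refine ih (R.erase v) S (Finset.disjoint_of_subset_left (erase_subset v R) hdis) ?_ h1
        have := card_erase_of_mem hv
        have hpos : 0 < R.card := card_pos.2 ⟨v, hv⟩
        omega
      · rw [lkC_sub Δ S hv] at h2
        have hd2 : Disjoint (R.erase v) (insert v S) := by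
          rw [Finset.disjoint_left]
          intro a ha haS
          obtain ⟨hav, haR⟩ := mem_erase.1 ha
          rcases mem_insert.1 haS with rfl | h
          · exact hav rfl
          · exact Finset.disjoint_left.1 hdis haR h
        obtain ⟨S', hS1, hS2⟩ := lemB hΔ (p - 1) (((R.erase v) ∪ (insert v S))ᶜ).card
          (R.erase v) (insert v S) hd2 le_rfl h2
        exact ⟨S', lt_of_lt_of_le (ssubset_insert hvS) hS1, hS2⟩

/-- if `H̃_p(Δ_{-(S∪T)}^{S,T}) ≠ 0` with `p ≥ 0` then
`H̃_{p-1}(lk_Δ S') ≠ 0` for some `S'` strictly containing `S`. -/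
theorem stmt10 (k : Type) [Field k] {n : ℕ} (Δ : Set (Finset (Fin n)))
    (hΔ : IsComplex Δ) (S T : Finset (Fin n)) (hST : Disjoint S T)
    (p : ℤ) (hp : 0 ≤ p)
    (h : ¬ Subsingleton (ReducedHomology k (sub Δ (S ∪ T)ᶜ S) p)) :
    ∃ S' : Finset (Fin n), S ⊂ S' ∧
      ¬ Subsingleton (ReducedHomology k (link Δ S') (p - 1)) := by
  rw [nz_iff (IsComplex_sub hΔ (S ∪ T)ᶜ S)] at h
  have hdis : Disjoint ((S ∪ T)ᶜ) S := by
    rw [Finset.disjoint_left]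
    intro a ha haS
    exact (mem_compl.1 ha) (mem_union_left T haS)
  obtain ⟨S', hS1, hS2⟩ := mainK hΔ p hp ((S ∪ T)ᶜ).card ((S ∪ T)ᶜ) S hdis le_rfl h
  exact ⟨S', hS1, (nz_iff (IsComplex_link hΔ S') (p - 1)).2 hS2⟩

end SCx
end
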